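/- Let G be a connected finite simple graph on n vertices whose diameter d(G) = 2k + 1 is odd. Then rank A(G) ≥ d(G) + 1; equivalently, η(G) ≤ n − d(G) − 1. -/

import Mathlib

open Classical in
/-- The adjacency matrix of a finite simple graph over `ℝ`. -/
noncomputable def adjMat {V : Type} [Fintype V] (G : SimpleGraph V) : Matrix V V ℝ :=
  Matrix.of fun i j => if G.Adj i j then (1 : ℝ) else 0

/-- The nullity `η(G)` of a finite simple graph: the dimension of the kernel of
its adjacency matrix over `ℝ`. -/
noncomputable def nullity {V : Type} [Fintype V] (G : SimpleGraph V) : ℕ :=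
  Module.finrank ℝ (LinearMap.ker (adjMat G).mulVecLin)

lemma key_rec (n : ℕ) (hn : Even n) (c : ℕ → ℝ)
    (hsupp : ∀ j, n ≤ j → c j = 0)
    (h1 : 0 < n → c 1 = 0)
    (h2 : ∀ j, j + 1 < n → c j + c (j + 2) = 0) :
    ∀ j, c j = 0 := by
  obtain ⟨s, hs⟩ := hn
  have hodd : ∀ t, c (2 * t + 1) = 0 := by
    intro t
    induction t with
    | zero =>
      by_cases h : n ≤ 1
      · exact hsupp 1 (by omega)
      · simpa using h1 (by omega)
    | succ t ih =>
      by_cases h : n ≤ 2 * (t + 1) + 1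
      · exact hsupp _ h
      · have h3 := h2 (2 * t + 1) (by omega)
        have he : 2 * (t + 1) + 1 = 2 * t + 1 + 2 := by omega
        rw [he]; linarith
  have heven : ∀ t, c (n - 2 * t) = 0 := by
    intro t
    induction t with
    | zero => simpa using hsupp n le_rfl
    | succ t ih =>
      by_cases h : n ≤ 2 * t + 1
      · have he : n - 2 * (t + 1) = n - 2 * t := by omega
        rw [he]; exact ih
      · have hlt : 2 * t + 2 ≤ n := by omega
        have := h2 (n - 2 * (t + 1)) (by omega)
        have he : n - 2 * (t + 1) + 2 = n - 2 * t := by omega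
        rw [he] at this
        linarith
  intro j
  rcases Nat.even_or_odd j with ⟨t, ht⟩ | ⟨t, ht⟩
  · by_cases h : n ≤ j
    · exact hsupp j h
    · have he : j = n - 2 * (s - t) := by omega
      rw [he]; exact heven _
  · have he : j = 2 * t + 1 := by omega
    rw [he]; exact hodd t

lemma sum_ite_val {N : ℕ} (c : Fin N → ℝ) (m : ℕ) :
    ∑ i : Fin N, c i * (if (i : ℕ) = m then (1:ℝ) else 0) =
      if h : m < N then c ⟨m, h⟩ else 0 := by
  split_ifs with h
  · rw [Finset.sum_eq_single ⟨m, h⟩]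
    · simp
    · intro i _ hi
      have : (i : ℕ) ≠ m := fun he => hi (Fin.ext he)
      simp [this]
    · simp
  · apply Finset.sum_eq_zero
    intro i _
    have : (i : ℕ) ≠ m := by omega
    simp [this]

open SimpleGraph in
lemma walk_dist_le {V : Type} (G : SimpleGraph V) (hG : G.Connected)
    {u v : V} (p : G.Walk u v) :
    ∀ k i : ℕ, G.dist (p.getVert i) (p.getVert (i + k)) ≤ k := by
  intro k
  induction k with
  | zero => simp
  | succ k ih =>
    intro i
    have tri := hG.dist_triangle (u := p.getVert i) (v := p.getVert (i + k))
      (w := p.getVert (i + k + 1))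
    have hstep : G.dist (p.getVert (i + k)) (p.getVert (i + k + 1)) ≤ 1 := by
      by_cases h : i + k < p.length
      · exact le_of_eq (dist_eq_one_iff_adj.mpr (p.adj_getVert_succ h))
      · have h1 : p.getVert (i + k) = v := p.getVert_of_length_le (by omega)
        have h2 : p.getVert (i + k + 1) = v := p.getVert_of_length_le (by omega)
        rw [h1, h2, SimpleGraph.dist_self]; omega
    have he : i + (k + 1) = i + k + 1 := by omega
    rw [he]
    calc G.dist (p.getVert i) (p.getVert (i+k+1)) ≤ _ + _ := tri
      _ ≤ k + 1 := by have := ih i; omega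

/-- If `G` is connected with odd diameter `d(G) = 2k + 1`, then
`rank A(G) ≥ d(G) + 1`; equivalently, `η(G) ≤ n - d(G) - 1`. -/
theorem stmt9 {V : Type} [Fintype V] (G : SimpleGraph V)
    (hG : G.Connected) (hodd : Odd G.diam) :
    G.diam + 1 ≤ (adjMat G).rank ∧
    nullity G ≤ Fintype.card V - G.diam - 1 := by
  classical
  have hV : Nonempty V := hG.nonempty
  obtain ⟨u, v, huv⟩ := SimpleGraph.exists_dist_eq_diam (G := G)
  obtain ⟨p, hp⟩ := hG.exists_walk_length_eq_dist u v
  set d := G.diam with hd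
  have hd1 : 1 ≤ d := by obtain ⟨k, hk⟩ := hodd; omega
  have hlen : p.length = d := by rw [hp, huv]
  have hub' : ∀ i j : ℕ, i ≤ j → G.dist (p.getVert i) (p.getVert j) ≤ j - i := by
    intro i j hij
    have := walk_dist_le G hG p (j - i) i
    rwa [Nat.add_sub_cancel' hij] at this
  have hdist : ∀ i j : ℕ, i ≤ j → j ≤ d → G.dist (p.getVert i) (p.getVert j) = j - i := by
    intro i j hij hj
    have hle := hub' i j hij
    have t1 : G.dist u (p.getVert i) ≤ i := by
      have := hub' 0 i (Nat.zero_le _)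
      simpa [p.getVert_zero] using this
    have t2 : G.dist (p.getVert j) v ≤ d - j := by
      have := hub' j p.length (by omega)
      rwa [p.getVert_length, hlen] at this
    have tri1 := hG.dist_triangle (u := u) (v := p.getVert i) (w := p.getVert j)
    have tri2 := hG.dist_triangle (u := u) (v := p.getVert j) (w := v)
    have hd2 : G.dist u v = d := huv
    omega
  have hadj : ∀ i j : ℕ, i ≤ d → j ≤ d →
      (G.Adj (p.getVert i) (p.getVert j) ↔ (i + 1 = j ∨ j + 1 = i)) := by
    intro i j hi hj
    constructor
    · intro h
      have h1 : G.dist (p.getVert i) (p.getVert j) = 1 :=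
        SimpleGraph.dist_eq_one_iff_adj.mpr h
      rcases le_total i j with hij | hij
      · left; have := hdist i j hij hj; omega
      · right
        have := hdist j i hij hi
        rw [SimpleGraph.dist_comm] at h1
        omega
    · rintro (h | h)
      · have := p.adj_getVert_succ (i := i) (by omega)
        rwa [show i + 1 = j from h] at this
      · have := p.adj_getVert_succ (i := j) (by omega)
        rw [show j + 1 = i from h] at this
        exact this.symm
  -- the rows of the adjacency matrix along the geodesic
  set r : Fin (d + 1) → (V → ℝ) := fun i => adjMat G (p.getVert i) with hr
  have hentry : ∀ i j : Fin (d + 1),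
      adjMat G (p.getVert (i : ℕ)) (p.getVert (j : ℕ)) =
        (if (i : ℕ) = (j : ℕ) + 1 then (1:ℝ) else 0) +
        (if ((i : ℕ) + 1 = (j : ℕ)) then (1:ℝ) else 0) := by
    intro i j
    have hi : (i : ℕ) ≤ d := by omega
    have hj : (j : ℕ) ≤ d := by omega
    by_cases hA : G.Adj (p.getVert (i : ℕ)) (p.getVert (j : ℕ))
    · have hor := (hadj i j hi hj).mp hA
      simp only [adjMat, Matrix.of_apply, if_pos hA]
      rcases hor with h | h
      · rw [if_neg (by omega), if_pos (by omega)]; norm_num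
      · rw [if_pos (by omega), if_neg (by omega)]; norm_num
    · have hnot : ¬((i : ℕ) + 1 = (j : ℕ) ∨ (j : ℕ) + 1 = (i : ℕ)) :=
        fun h => hA ((hadj i j hi hj).mpr h)
      push_neg at hnot
      simp only [adjMat, Matrix.of_apply, if_neg hA]
      rw [if_neg (by omega), if_neg (by omega)]; norm_num
  have hli : LinearIndependent ℝ r := by
    rw [Fintype.linearIndependent_iff]
    intro c hc i0
    set c' : ℕ → ℝ := fun m => if h : m < d + 1 then c ⟨m, h⟩ else 0 with hc'
    have hcol : ∀ j : Fin (d + 1),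
        ∑ i : Fin (d + 1), c i * adjMat G (p.getVert (i : ℕ)) (p.getVert (j : ℕ)) = 0 := by
      intro j
      have := congrFun hc (p.getVert (j : ℕ))
      simpa [r, Finset.sum_apply, Pi.smul_apply, smul_eq_mul] using this
    have hcol' : ∀ jv : ℕ, ∀ hj : jv < d + 1,
        c' (jv + 1) + (∑ i : Fin (d + 1),
          c i * (if ((i : ℕ) + 1 = jv) then (1:ℝ) else 0)) = 0 := by
      intro jv hjv
      set j : Fin (d + 1) := ⟨jv, hjv⟩ with hjdef
      have hjval : (j : ℕ) = jv := rfl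
      rw [← hjval]
      have h0 := hcol j
      calc c' ((j : ℕ) + 1) + (∑ i : Fin (d + 1),
            c i * (if ((i : ℕ) + 1 = (j : ℕ)) then (1:ℝ) else 0))
          = (∑ i : Fin (d + 1), c i * (if (i : ℕ) = (j : ℕ) + 1 then (1:ℝ) else 0)) +
            (∑ i : Fin (d + 1), c i * (if ((i : ℕ) + 1 = (j : ℕ)) then (1:ℝ) else 0)) := by
            rw [sum_ite_val]
        _ = ∑ i : Fin (d + 1), c i * adjMat G (p.getVert (i : ℕ)) (p.getVert (j : ℕ)) := by
            rw [← Finset.sum_add_distrib]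
            apply Finset.sum_congr rfl
            intro i _
            rw [hentry i j]
            ring
        _ = 0 := h0
    have hsupp : ∀ m, d + 1 ≤ m → c' m = 0 := by
      intro m hm
      simp only [hc']
      rw [dif_neg (by omega)]
    have h1 : 0 < d + 1 → c' 1 = 0 := by
      intro _
      have := hcol' 0 (by omega)
      simpa using this
    have h2 : ∀ m, m + 1 < d + 1 → c' m + c' (m + 2) = 0 := by
      intro m hm
      have := hcol' (m + 1) (by omega)
      have hsum : (∑ i : Fin (d + 1),
          c i * (if ((i : ℕ) + 1 = m + 1) then (1:ℝ) else 0))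
          = c' m := by
        rw [show (∑ i : Fin (d + 1),
            c i * (if ((i : ℕ) + 1 = m + 1) then (1:ℝ) else 0))
            = ∑ i : Fin (d + 1), c i * (if (i : ℕ) = m then (1:ℝ) else 0) from
          Finset.sum_congr rfl (fun i _ => by
            congr 1
            apply if_congr _ rfl rfl
            constructor <;> intro h <;> omega)]
        rw [sum_ite_val]
      rw [hsum] at this
      have : c' (m + 1 + 1) + c' m = 0 := this
      have he : m + 1 + 1 = m + 2 := by omega
      rw [he] at this
      linarith
    have hall := key_rec (d + 1) (by exact hodd.add_one) c' hsupp h1 h2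
    have := hall (i0 : ℕ)
    simpa [hc', i0.isLt, (by omega : (i0 : ℕ) ≤ d)] using this
  have hrank : d + 1 ≤ (adjMat G).rank := by
    have hcard : Fintype.card (Fin (d + 1)) = Set.finrank ℝ (Set.range r) :=
      linearIndependent_iff_card_eq_finrank_span.mp hli
    have hle : Submodule.span ℝ (Set.range r) ≤
        Submodule.span ℝ (Set.range (adjMat G)) := by
      apply Submodule.span_mono
      rintro _ ⟨i, rfl⟩
      exact ⟨p.getVert (i : ℕ), rfl⟩
    rw [Matrix.rank_eq_finrank_span_row]
    calc d + 1 = Set.finrank ℝ (Set.range r) := by simpa using hcard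
      _ ≤ _ := Submodule.finrank_mono hle
  refine ⟨hrank, ?_⟩
  have hrn : (adjMat G).rank + nullity G = Fintype.card V := by
    rw [Matrix.rank, nullity]
    rw [LinearMap.finrank_range_add_finrank_ker]
    exact Module.finrank_fintype_fun_eq_card ℝ
  omega
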